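/- Let p > 1, b = 1, d ∈ ℝ, and let f : ℝ → ℝ be continuous with primitive 𝓕(w) = ∫₀^w f(s) ds. If w is a solution of equation (3.4) (with b = 1) on an interval I, then the Painlevé function τ ↦ (1/p)(w(τ)² + w'(τ)²)^{p/2−1}((p−1)w'(τ)² − w(τ)²) − d|w(τ)|^p/p + 𝓕(w(τ)) is constant on I. -/

import Mathlib

open Real Set Filter Topology MeasureTheory

noncomputable section

/-- A solution of equation (3.4) on a set `I`, with derivative `w'`:
`(d/dτ)[(w² + w'²)^{(p−2)/2} w'] − b (w² + w'²)^{(p−2)/2} w + f(w) − d|w|^{p−2}w = 0`. -/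
def SolOn (p b d : ℝ) (f w w' : ℝ → ℝ) (I : Set ℝ) : Prop :=
  ContinuousOn w' I ∧
  (∀ τ ∈ I, HasDerivWithinAt w (w' τ) I τ) ∧
  ∃ F' : ℝ → ℝ,
    (∀ τ ∈ I, HasDerivWithinAt
      (fun s => (w s ^ 2 + w' s ^ 2) ^ ((p - 2) / 2) * w' s) (F' τ) I τ) ∧
    (∀ τ ∈ I, F' τ - b * (w τ ^ 2 + w' τ ^ 2) ^ ((p - 2) / 2) * w τ + f (w τ)
      - d * |w τ| ^ (p - 2) * w τ = 0)

/-- Conditions (3.2) on the nonlinearity `f`. -/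
def Cond32 (p q : ℝ) (f : ℝ → ℝ) : Prop :=
  Continuous f ∧ ContDiffOn ℝ 1 f {(0:ℝ)}ᶜ ∧ (∀ s, f (-s) = -f s) ∧
  Tendsto (fun s => f s / s ^ q) (𝓝[>] (0:ℝ)) (𝓝 1) ∧
  Tendsto (fun s => f s / s ^ (p - 1)) atTop atTop ∧
  StrictMonoOn (fun s => f s / s ^ (p - 1)) (Ioi 0)

/-- The function `E(ξ) = ((p−1)ξ² − b)(1+ξ²)^{p/2−1}`. -/
def Efun (p b : ℝ) (ξ : ℝ) : ℝ := ((p - 1) * ξ ^ 2 - b) * (1 + ξ ^ 2) ^ (p / 2 - 1)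

/-- A function taking both positive and negative values. -/
def SignChanging (ω : ℝ → ℝ) : Prop := (∃ σ, 0 < ω σ) ∧ (∃ σ, ω σ < 0)

/-- `T` is the least period of `ω`. -/
def IsLeastPeriod (ω : ℝ → ℝ) (T : ℝ) : Prop :=
  0 < T ∧ Function.Periodic ω T ∧ ∀ T', 0 < T' → Function.Periodic ω T' → T ≤ T'

lemma sq_rpow' (x q : ℝ) : (x^2) ^ q = |x| ^ (2*q) := by
  rw [← sq_abs, ← Real.rpow_natCast |x| 2, ← Real.rpow_mul (abs_nonneg x)]
  norm_num

lemma habs {p : ℝ} (hp : 1 < p) (x : ℝ) :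
    HasDerivAt (fun x : ℝ => |x| ^ p) (p * |x| ^ (p-2) * x) x := by
  have hfun : (fun x : ℝ => |x| ^ p) = fun x : ℝ => (x^2) ^ (p/2) := by
    funext y; rw [sq_rpow', show 2*(p/2) = p by ring]
  rcases eq_or_ne x 0 with rfl | hx
  · rw [show p * |(0:ℝ)| ^ (p-2) * 0 = 0 by ring]
    rw [hasDerivAt_iff_tendsto_slope]
    apply squeeze_zero_norm (a := fun h : ℝ => |h| ^ (p-1))
    · intro h
      rcases eq_or_ne h 0 with rfl | hh
      · simp [slope, Real.zero_rpow (by linarith : p - 1 ≠ 0)]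
      · have h1 : slope (fun x : ℝ => |x| ^ p) 0 h = |h| ^ p / h := by
          simp [slope, Real.zero_rpow (by linarith : p ≠ 0)]; ring
        rw [h1, Real.norm_eq_abs, abs_div, abs_of_nonneg (Real.rpow_nonneg (abs_nonneg h) p),
          ← Real.rpow_sub_one (abs_ne_zero.2 hh)]
    · have hc : ContinuousAt (fun h : ℝ => |h| ^ (p-1)) 0 :=
        (Real.continuousAt_rpow_const _ _ (Or.inr (by linarith))).comp continuous_abs.continuousAt
      have := hc.tendsto.mono_left (nhdsWithin_le_nhds (s := {(0:ℝ)}ᶜ))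
      simpa [Real.zero_rpow (by linarith : p - 1 ≠ 0)] using this
  · rw [hfun]
    have h1 : HasDerivAt (fun x : ℝ => x^2) (2*x) x := by
      simpa using hasDerivAt_pow 2 x
    have h2 := h1.rpow_const (p := p/2) (Or.inl (pow_ne_zero 2 hx))
    convert h2 using 1
    rw [sq_rpow', show 2*(p/2-1) = p-2 by ring]
    ring

lemma hasDerivAt_c {p : ℝ} (hp : 1 < p) (k x : ℝ) :
    HasDerivAt (fun x : ℝ => (1/p) * (x^2 + k^2) ^ (p/2)) ((x^2+k^2)^(p/2-1) * x) x := by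
  rcases eq_or_ne (x^2 + k^2) 0 with h0 | h0
  · have hx : x = 0 := by nlinarith [sq_nonneg x, sq_nonneg k]
    have hk : k = 0 := by nlinarith [sq_nonneg x, sq_nonneg k]
    subst hx; subst hk
    have hfun : (fun x : ℝ => (1/p) * (x^2 + 0^2) ^ (p/2)) = fun x : ℝ => (1/p) * |x| ^ p := by
      funext y; rw [show y^2 + (0:ℝ)^2 = y^2 by ring, sq_rpow', show 2*(p/2) = p by ring]
    rw [hfun]
    have := (habs hp 0).const_mul (1/p)
    refine this.congr_deriv ?_
    simp [Real.zero_rpow]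
  · have h1 : HasDerivAt (fun x : ℝ => x^2 + k^2) (2*x) x := by
      simpa using (hasDerivAt_pow 2 x).add_const (k^2)
    have h2 := (h1.rpow_const (p := p/2) (Or.inl h0)).const_mul (1/p)
    refine h2.congr_deriv ?_
    have hp0 : p ≠ 0 := by linarith
    field_simp

lemma hasDerivAt_c' {p : ℝ} (hp : 1 < p) (a ξ : ℝ) :
    HasDerivAt (fun ξ : ℝ => (1/p) * (a^2 + ξ^2) ^ (p/2)) ((a^2+ξ^2)^(p/2-1) * ξ) ξ := by
  simpa [add_comm] using hasDerivAt_c hp a ξ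

lemma mono_g {p : ℝ} (hp : 1 < p) (a : ℝ) :
    Monotone (fun ξ : ℝ => (a^2+ξ^2)^(p/2-1) * ξ) := by
  rcases eq_or_ne a 0 with rfl | ha
  · have hrep : ∀ ξ : ℝ, 0 ≤ ξ → ((0:ℝ)^2+ξ^2)^(p/2-1) * ξ = ξ^(p-1) := by
      intro ξ hξ
      rcases eq_or_ne ξ 0 with rfl | hξ0
      · simp [Real.zero_rpow (show p-1 ≠ 0 by linarith)]
      · rw [show (0:ℝ)^2 + ξ^2 = ξ^2 by ring, sq_rpow', show 2*(p/2-1) = p-2 by ring,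
          abs_of_nonneg hξ, ← Real.rpow_add_one hξ0, show p-2+1 = p-1 by ring]
    have hodd : ∀ ξ : ℝ, ((0:ℝ)^2+(-ξ)^2)^(p/2-1) * (-ξ) = -(((0:ℝ)^2+ξ^2)^(p/2-1) * ξ) := by
      intro ξ; rw [show (-ξ)^2 = ξ^2 by ring]; ring
    intro ξ₁ ξ₂ h
    simp only []
    rcases le_or_gt 0 ξ₁ with h1 | h1
    · rw [hrep ξ₁ h1, hrep ξ₂ (h1.trans h)]
      exact Real.rpow_le_rpow h1 h (by linarith)
    rcases le_or_gt ξ₂ 0 with h2 | h2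
    · have e1 := hodd ξ₁; have e2 := hodd ξ₂
      have hle : (-ξ₂)^(p-1) ≤ (-ξ₁)^(p-1) :=
        Real.rpow_le_rpow (by linarith) (by linarith) (by linarith)
      rw [hrep (-ξ₁) (by linarith)] at e1
      rw [hrep (-ξ₂) (by linarith)] at e2
      linarith
    · have e1 := hodd ξ₁
      rw [hrep (-ξ₁) (by linarith)] at e1
      have g1 : (0:ℝ) ≤ (-ξ₁)^(p-1) := Real.rpow_nonneg (by linarith) _
      rw [hrep ξ₂ h2.le]
      have g2 : (0:ℝ) ≤ ξ₂^(p-1) := Real.rpow_nonneg h2.le _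
      linarith
  · have hD : ∀ ξ : ℝ, HasDerivAt (fun ξ : ℝ => (a^2+ξ^2)^(p/2-1) * ξ)
        ((2*ξ) * (p/2-1) * (a^2+ξ^2)^(p/2-1-1) * ξ + (a^2+ξ^2)^(p/2-1)) ξ := by
      intro ξ
      have hbase : a^2 + ξ^2 ≠ 0 := by positivity
      have h1 : HasDerivAt (fun ξ : ℝ => a^2 + ξ^2) (2*ξ) ξ := by
        simpa using (hasDerivAt_pow 2 ξ).const_add (a^2)
      have h2 := h1.rpow_const (p := p/2-1) (Or.inl hbase)
      have h3 := h2.mul (hasDerivAt_id ξ)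
      refine h3.congr_deriv ?_
      simp
    apply monotone_of_deriv_nonneg
    · exact fun ξ => (hD ξ).differentiableAt
    · intro ξ
      rw [(hD ξ).deriv]
      have hpos : (0:ℝ) < a^2 + ξ^2 := by positivity
      have hsplit : (a^2+ξ^2)^(p/2-1) = (a^2+ξ^2)^(p/2-1-1) * (a^2+ξ^2) := by
        have := Real.rpow_add_one (ne_of_gt hpos) (p/2-1-1)
        rw [show p/2-1-1+1 = p/2-1 by ring] at this
        exact this
      rw [hsplit]
      have h3 : (0:ℝ) < (a^2+ξ^2)^(p/2-1-1) := Real.rpow_pos_of_pos hpos _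
      have key : (2*ξ) * (p/2-1) * (a^2+ξ^2)^(p/2-1-1) * ξ + (a^2+ξ^2)^(p/2-1-1) * (a^2+ξ^2)
          = (a^2+ξ^2)^(p/2-1-1) * ((p-1)*ξ^2 + a^2) := by ring
      rw [key]
      have : (0:ℝ) ≤ (p-1)*ξ^2 + a^2 := by nlinarith [sq_nonneg ξ, sq_nonneg a]
      positivity

lemma tangent {p : ℝ} (hp : 1 < p) (a k ξ : ℝ) :
    ξ * ((a^2+k^2)^(p/2-1)*k) - (1/p)*(a^2+ξ^2)^(p/2) ≤
    k * ((a^2+k^2)^(p/2-1)*k) - (1/p)*(a^2+k^2)^(p/2) := by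
  have key : ∀ u v : ℝ, u < v → ∃ θ, u ≤ θ ∧ θ ≤ v ∧
      (1/p)*(a^2+v^2)^(p/2) - (1/p)*(a^2+u^2)^(p/2) = ((a^2+θ^2)^(p/2-1)*θ) * (v - u) := by
    intro u v huv
    obtain ⟨θ, hθ, hval⟩ := exists_hasDerivAt_eq_slope (fun x => (1/p)*(a^2+x^2)^(p/2))
      (fun x => (a^2+x^2)^(p/2-1)*x) huv
      (fun x _ => (hasDerivAt_c' hp a x).continuousAt.continuousWithinAt)
      (fun x _ => hasDerivAt_c' hp a x)
    refine ⟨θ, hθ.1.le, hθ.2.le, ?_⟩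
    rw [hval]
    have hvu : v - u ≠ 0 := sub_ne_zero.2 (ne_of_gt huv)
    have hp0 : p ≠ 0 := by linarith
    field_simp
  rcases lt_trichotomy ξ k with h | h | h
  · obtain ⟨θ, hθ1, hθ2, hval⟩ := key ξ k h
    have hm : (a^2+θ^2)^(p/2-1)*θ ≤ (a^2+k^2)^(p/2-1)*k := mono_g hp a hθ2
    nlinarith [mul_nonneg (sub_nonneg.2 hm) (sub_nonneg.2 h.le)]
  · subst h; exact le_refl _
  · obtain ⟨θ, hθ1, hθ2, hval⟩ := key k ξ h
    have hm : (a^2+k^2)^(p/2-1)*k ≤ (a^2+θ^2)^(p/2-1)*θ := mono_g hp a hθ1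
    nlinarith [mul_nonneg (sub_nonneg.2 hm) (sub_nonneg.2 h.le)]

open Asymptotics in
lemma squeezeDeriv {G lo up : ℝ → ℝ} {L τ₀ : ℝ} {I : Set ℝ} (hτ₀ : τ₀ ∈ I)
    (hlo : ∀ τ ∈ I, lo τ ≤ G τ - G τ₀) (hup : ∀ τ ∈ I, G τ - G τ₀ ≤ up τ)
    (hlod : HasDerivWithinAt lo L I τ₀) (hlo0 : lo τ₀ = 0)
    (hupE : (fun τ => up τ - (τ - τ₀) * L) =o[𝓝[I] τ₀] fun τ => τ - τ₀) :
    HasDerivWithinAt G L I τ₀ := by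
  rw [hasDerivWithinAt_iff_isLittleO]
  have hloE : (fun τ => lo τ - (τ - τ₀) * L) =o[𝓝[I] τ₀] fun τ => τ - τ₀ := by
    have := hasDerivWithinAt_iff_isLittleO.1 hlod
    simp only [hlo0, smul_eq_mul, sub_zero] at this
    exact this
  have hsmall : (fun τ => |lo τ - (τ - τ₀) * L| + |up τ - (τ - τ₀) * L|) =o[𝓝[I] τ₀]
      fun τ => τ - τ₀ := hloE.abs_left.add hupE.abs_left
  have hbig : (fun τ => G τ - G τ₀ - (τ - τ₀) • L) =O[𝓝[I] τ₀]
      fun τ => |lo τ - (τ - τ₀) * L| + |up τ - (τ - τ₀) * L| := by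
    refine IsBigO.of_bound 1 ?_
    filter_upwards [eventually_mem_nhdsWithin] with τ hτ
    have h1 := hlo τ hτ
    have h2 := hup τ hτ
    have a1 : lo τ - (τ - τ₀) * L ≤ |lo τ - (τ - τ₀) * L| := le_abs_self _
    have a2 : -(|lo τ - (τ - τ₀) * L|) ≤ lo τ - (τ - τ₀) * L := neg_abs_le _
    have a3 : up τ - (τ - τ₀) * L ≤ |up τ - (τ - τ₀) * L| := le_abs_self _
    have a4 : (0:ℝ) ≤ |lo τ - (τ - τ₀) * L| := abs_nonneg _
    have a5 : (0:ℝ) ≤ |up τ - (τ - τ₀) * L| := abs_nonneg _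
    rw [Real.norm_eq_abs, Real.norm_eq_abs, one_mul, smul_eq_mul,
      abs_of_nonneg (by linarith : (0:ℝ) ≤ |lo τ - (τ - τ₀) * L| + |up τ - (τ - τ₀) * L|)]
    rw [abs_le]
    constructor <;> linarith
  exact hbig.trans_isLittleO hsmall

lemma tendsto_gx {p : ℝ} (hp : 1 < p) {α : Type*} {l : Filter α} {u v : α → ℝ} {x₀ k₀ : ℝ}
    (hu : Tendsto u l (𝓝 x₀)) (hv : Tendsto v l (𝓝 k₀)) :
    Tendsto (fun t => (u t^2 + v t^2)^(p/2-1) * u t) l (𝓝 ((x₀^2+k₀^2)^(p/2-1) * x₀)) := by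
  have hS : Tendsto (fun t => u t^2 + v t^2) l (𝓝 (x₀^2+k₀^2)) := (hu.pow 2).add (hv.pow 2)
  rcases eq_or_ne (x₀^2 + k₀^2) 0 with h0 | h0
  · have hx : x₀ = 0 := by nlinarith [sq_nonneg x₀, sq_nonneg k₀]
    rw [hx, mul_zero]
    apply squeeze_zero_norm (a := fun t => (u t^2 + v t^2)^((p-1)/2))
    · intro t
      rcases eq_or_ne (u t^2 + v t^2) 0 with ht | ht
      · have hu0 : u t = 0 := by nlinarith [sq_nonneg (u t), sq_nonneg (v t)]
        simp only [hu0, Real.norm_eq_abs, mul_zero, abs_zero]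
        positivity
      · have htpos : (0:ℝ) < u t^2 + v t^2 := lt_of_le_of_ne (by positivity) (Ne.symm ht)
        have hb1 : |u t| ≤ (u t^2 + v t^2)^((1:ℝ)/2) := by
          have : |u t| = (u t^2)^((1:ℝ)/2) := by
            rw [sq_rpow']; norm_num
          rw [this]
          exact Real.rpow_le_rpow (sq_nonneg _) (by nlinarith [sq_nonneg (v t)]) (by norm_num)
        have hb2 : (0:ℝ) ≤ (u t^2 + v t^2)^(p/2-1) := Real.rpow_nonneg htpos.le _
        rw [Real.norm_eq_abs, abs_mul, abs_of_nonneg hb2]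
        calc (u t^2 + v t^2)^(p/2-1) * |u t|
            ≤ (u t^2 + v t^2)^(p/2-1) * (u t^2 + v t^2)^((1:ℝ)/2) :=
              mul_le_mul_of_nonneg_left hb1 hb2
          _ = (u t^2 + v t^2)^((p-1)/2) := by
              rw [← Real.rpow_add htpos]; norm_num; ring_nf
    · have hc : ContinuousAt (fun s : ℝ => s ^ ((p-1)/2)) 0 :=
        Real.continuousAt_rpow_const _ _ (Or.inr (by linarith))
      have := hc.tendsto.comp (by rw [h0] at hS; exact hS)
      simpa [Function.comp_def, Real.zero_rpow (show (p-1)/2 ≠ 0 by intro h; nlinarith)] using this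
  · exact ((Real.continuousAt_rpow_const _ _ (Or.inl h0)).tendsto.comp hS).mul hu

open Asymptotics in
lemma keyDeriv {p : ℝ} (hp : 1 < p) {w w' F' : ℝ → ℝ} {I : Set ℝ} {τ₀ : ℝ} (hτ₀ : τ₀ ∈ I)
    (hw'cont : ContinuousOn w' I)
    (hwd : ∀ τ ∈ I, HasDerivWithinAt w (w' τ) I τ)
    (hΦd : HasDerivWithinAt (fun s => (w s^2 + w' s^2)^(p/2-1) * w' s) (F' τ₀) I τ₀) :
    HasDerivWithinAt
      (fun τ => w' τ * ((w τ^2 + w' τ^2)^(p/2-1) * w' τ) - (1/p)*(w τ^2 + w' τ^2)^(p/2))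
      (w' τ₀ * F' τ₀ - (w τ₀^2 + w' τ₀^2)^(p/2-1) * w τ₀ * w' τ₀) I τ₀ := by
  have hwt : Tendsto w (𝓝[I] τ₀) (𝓝 (w τ₀)) := (hwd τ₀ hτ₀).continuousWithinAt
  have hw't : Tendsto w' (𝓝[I] τ₀) (𝓝 (w' τ₀)) := hw'cont τ₀ hτ₀
  have hθex : ∀ τ : ℝ, ∃ θ : ℝ, |θ - w τ₀| ≤ |w τ - w τ₀| ∧
      (1/p)*(w τ^2 + w' τ^2)^(p/2) - (1/p)*(w τ₀^2 + w' τ^2)^(p/2)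
        = ((θ^2 + w' τ^2)^(p/2-1) * θ) * (w τ - w τ₀) := by
    intro τ
    rcases lt_trichotomy (w τ) (w τ₀) with h | h | h
    · obtain ⟨θ, hθ, hval⟩ := exists_hasDerivAt_eq_slope
        (fun x => (1/p)*(x^2 + w' τ^2)^(p/2)) (fun x => (x^2 + w' τ^2)^(p/2-1) * x) h
        (fun x _ => (hasDerivAt_c hp (w' τ) x).continuousAt.continuousWithinAt)
        (fun x _ => hasDerivAt_c hp (w' τ) x)
      refine ⟨θ, ?_, ?_⟩
      · rw [abs_of_neg (show θ - w τ₀ < 0 by linarith [hθ.2]),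
          abs_of_neg (show w τ - w τ₀ < 0 by linarith)]
        linarith [hθ.1]
      · rw [eq_div_iff (show w τ₀ - w τ ≠ 0 by intro hc; linarith)] at hval
        linear_combination hval
    · exact ⟨w τ₀, by simp [h], by rw [h]; ring⟩
    · obtain ⟨θ, hθ, hval⟩ := exists_hasDerivAt_eq_slope
        (fun x => (1/p)*(x^2 + w' τ^2)^(p/2)) (fun x => (x^2 + w' τ^2)^(p/2-1) * x) h
        (fun x _ => (hasDerivAt_c hp (w' τ) x).continuousAt.continuousWithinAt)
        (fun x _ => hasDerivAt_c hp (w' τ) x)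
      refine ⟨θ, ?_, ?_⟩
      · rw [abs_of_pos (show 0 < θ - w τ₀ by linarith [hθ.1]),
          abs_of_pos (show 0 < w τ - w τ₀ by linarith)]
        linarith [hθ.2]
      · rw [eq_div_iff (show w τ - w τ₀ ≠ 0 by intro hc; linarith)] at hval
        linear_combination -hval
  choose θ hθ1 hθ2 using hθex
  have hθt : Tendsto θ (𝓝[I] τ₀) (𝓝 (w τ₀)) := by
    have h1 : Tendsto (fun τ => θ τ - w τ₀) (𝓝[I] τ₀) (𝓝 0) := by
      apply squeeze_zero_norm hθ1
      have := (hwt.sub (tendsto_const_nhds (x := w τ₀))).abs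
      simpa using this
    have := h1.add (tendsto_const_nhds (x := w τ₀))
    simpa using this
  have hφt := tendsto_gx hp hθt hw't
  have hΦo : (fun τ => (w τ^2 + w' τ^2)^(p/2-1) * w' τ
      - (w τ₀^2 + w' τ₀^2)^(p/2-1) * w' τ₀ - (τ - τ₀) * F' τ₀)
      =o[𝓝[I] τ₀] fun τ => τ - τ₀ := by
    have := hasDerivWithinAt_iff_isLittleO.1 hΦd
    simpa [smul_eq_mul] using this
  have hwo : (fun τ => w τ - w τ₀ - (τ - τ₀) * w' τ₀) =o[𝓝[I] τ₀] fun τ => τ - τ₀ := by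
    have := hasDerivWithinAt_iff_isLittleO.1 (hwd τ₀ hτ₀)
    simpa [smul_eq_mul] using this
  apply squeezeDeriv hτ₀
    (lo := fun τ => w' τ₀ * ((w τ^2 + w' τ^2)^(p/2-1) * w' τ)
      - (1/p)*(w τ^2 + w' τ₀^2)^(p/2)
      - (w' τ₀ * ((w τ₀^2 + w' τ₀^2)^(p/2-1) * w' τ₀) - (1/p)*(w τ₀^2 + w' τ₀^2)^(p/2)))
    (up := fun τ => w' τ * ((w τ^2 + w' τ^2)^(p/2-1) * w' τ
        - (w τ₀^2 + w' τ₀^2)^(p/2-1) * w' τ₀)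
      + (1/p)*(w τ₀^2 + w' τ^2)^(p/2) - (1/p)*(w τ^2 + w' τ^2)^(p/2))
  · -- lower bound
    intro τ hτ
    have h := tangent hp (w τ) (w' τ) (w' τ₀)
    linarith
  · -- upper bound
    intro τ hτ
    have h := tangent hp (w τ₀) (w' τ₀) (w' τ)
    linarith
  · -- lo differentiable
    have hd2 : HasDerivWithinAt (fun τ => (1/p)*(w τ^2 + w' τ₀^2)^(p/2))
        ((w τ₀^2 + w' τ₀^2)^(p/2-1) * w τ₀ * w' τ₀) I τ₀ := by
      have := (hasDerivAt_c hp (w' τ₀) (w τ₀)).comp_hasDerivWithinAt τ₀ (hwd τ₀ hτ₀)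
      simpa [Function.comp_def, mul_assoc] using this
    exact ((hΦd.const_mul (w' τ₀)).sub hd2).sub_const _
  · -- lo τ₀ = 0
    simp
  · -- up little-o
    have t1 : (fun τ => w' τ * ((w τ^2 + w' τ^2)^(p/2-1) * w' τ
        - (w τ₀^2 + w' τ₀^2)^(p/2-1) * w' τ₀ - (τ - τ₀) * F' τ₀))
        =o[𝓝[I] τ₀] fun τ => τ - τ₀ := by
      simpa using (hw't.isBigO_one ℝ).mul_isLittleO hΦo
    have t2 : (fun τ => F' τ₀ * ((w' τ - w' τ₀) * (τ - τ₀)))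
        =o[𝓝[I] τ₀] fun τ => τ - τ₀ := by
      have t2a : (fun τ => w' τ - w' τ₀) =o[𝓝[I] τ₀] (fun _ => (1:ℝ)) := by
        rw [isLittleO_one_iff]
        simpa using hw't.sub (tendsto_const_nhds (x := w' τ₀))
      simpa using (t2a.mul_isBigO (isBigO_refl (fun τ : ℝ => τ - τ₀) _)).const_mul_left (F' τ₀)
    have t3 : (fun τ => ((θ τ^2 + w' τ^2)^(p/2-1) * θ τ) * (w τ - w τ₀ - (τ - τ₀) * w' τ₀))
        =o[𝓝[I] τ₀] fun τ => τ - τ₀ := by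
      simpa using (hφt.isBigO_one ℝ).mul_isLittleO hwo
    have t4 : (fun τ => (((θ τ^2 + w' τ^2)^(p/2-1) * θ τ) * w' τ₀
        - (w τ₀^2 + w' τ₀^2)^(p/2-1) * w τ₀ * w' τ₀) * (τ - τ₀))
        =o[𝓝[I] τ₀] fun τ => τ - τ₀ := by
      have t4a : (fun τ => ((θ τ^2 + w' τ^2)^(p/2-1) * θ τ) * w' τ₀
          - (w τ₀^2 + w' τ₀^2)^(p/2-1) * w τ₀ * w' τ₀) =o[𝓝[I] τ₀] (fun _ => (1:ℝ)) := by
        rw [isLittleO_one_iff]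
        have := (hφt.mul_const (w' τ₀)).sub
          (tendsto_const_nhds (x := (w τ₀^2 + w' τ₀^2)^(p/2-1) * w τ₀ * w' τ₀))
        simpa [mul_assoc] using this
      simpa using t4a.mul_isBigO (isBigO_refl (fun τ : ℝ => τ - τ₀) _)
    have hsum := ((t1.add t2).add t3.neg_left).add t4.neg_left
    refine (Filter.EventuallyEq.trans_isLittleO ?_ hsum)
    filter_upwards [] with τ
    linear_combination -(hθ2 τ)

lemma Eterm_eq {p : ℝ} (hp : 1 < p) (a k : ℝ) :
    (1/p)*(a^2+k^2)^(p/2-1)*((p-1)*k^2-a^2)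
      = k*((a^2+k^2)^(p/2-1)*k) - (1/p)*(a^2+k^2)^(p/2) := by
  have hp0 : p ≠ 0 := by linarith
  rcases eq_or_ne (a^2+k^2) 0 with h0 | h0
  · have ha : a = 0 := by nlinarith [sq_nonneg a, sq_nonneg k]
    have hk : k = 0 := by nlinarith [sq_nonneg a, sq_nonneg k]
    subst ha; subst hk
    norm_num [Real.zero_rpow (show p/2 ≠ 0 by positivity)]
  · have hsplit : (a^2+k^2)^(p/2) = (a^2+k^2)^(p/2-1) * (a^2+k^2) := by
      have := Real.rpow_add_one h0 (p/2-1)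
      rw [show p/2-1+1 = p/2 by ring] at this
      exact this
    rw [hsplit]
    field_simp
    ring


theorem statement14 (p d : ℝ) (hp : 1 < p) (f : ℝ → ℝ) (hf : Continuous f)
    (w w' : ℝ → ℝ) (I : Set ℝ) (hI : I.OrdConnected)
    (hw : SolOn p 1 d f w w' I) :
    ∀ τ₁ ∈ I, ∀ τ₂ ∈ I,
      (1 / p) * (w τ₁ ^ 2 + w' τ₁ ^ 2) ^ (p / 2 - 1) * ((p - 1) * w' τ₁ ^ 2 - w τ₁ ^ 2)
          - d * |w τ₁| ^ p / p + ∫ s in (0:ℝ)..(w τ₁), f s =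
      (1 / p) * (w τ₂ ^ 2 + w' τ₂ ^ 2) ^ (p / 2 - 1) * ((p - 1) * w' τ₂ ^ 2 - w τ₂ ^ 2)
          - d * |w τ₂| ^ p / p + ∫ s in (0:ℝ)..(w τ₂), f s := by
  obtain ⟨hw'cont, hwd, F', hF', heq⟩ := hw
  have hexp : (p-2)/2 = p/2-1 := by ring
  simp only [hexp] at hF' heq
  have hconv : Convex ℝ I := convex_iff_ordConnected.2 hI
  have hp0 : p ≠ 0 := by linarith
  intro τ₁ h₁ τ₂ h₂
  set E : ℝ → ℝ := fun τ =>
      (1 / p) * (w τ ^ 2 + w' τ ^ 2) ^ (p / 2 - 1) * ((p - 1) * w' τ ^ 2 - w τ ^ 2)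
        - d * |w τ| ^ p / p + ∫ s in (0:ℝ)..(w τ), f s with hE
  have hEd : ∀ τ₀ ∈ I, HasDerivWithinAt E 0 I τ₀ := by
    intro τ₀ hτ₀
    have h1 := keyDeriv hp hτ₀ hw'cont hwd (hF' τ₀ hτ₀)
    have h2 : HasDerivWithinAt (fun τ => d * |w τ| ^ p / p)
        (d * (|w τ₀|^(p-2) * w τ₀ * w' τ₀)) I τ₀ := by
      have h2a := ((habs hp (w τ₀)).comp_hasDerivWithinAt τ₀ (hwd τ₀ hτ₀)).const_mul (d/p)
      simp only [Function.comp_def] at h2a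
      convert h2a using 1
      · rfl
      · rfl
      · funext τ; ring
      · field_simp
    have h3 : HasDerivWithinAt (fun τ => ∫ s in (0:ℝ)..(w τ), f s) (f (w τ₀) * w' τ₀) I τ₀ := by
      have hFTC := (hf.integral_hasStrictDerivAt 0 (w τ₀)).hasDerivAt
      have := hFTC.comp_hasDerivWithinAt τ₀ (hwd τ₀ hτ₀)
      simpa [Function.comp_def] using this
    have hsum := (h1.sub h2).add h3
    have hzero : (w' τ₀ * F' τ₀ - (w τ₀^2 + w' τ₀^2)^(p/2-1) * w τ₀ * w' τ₀)
        - d * (|w τ₀|^(p-2) * w τ₀ * w' τ₀) + f (w τ₀) * w' τ₀ = 0 := by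
      linear_combination (w' τ₀) * (heq τ₀ hτ₀)
    rw [hzero] at hsum
    apply hsum.congr
    · intro y hy
      simp only [hE, Pi.add_apply, Pi.sub_apply]
      linarith [Eterm_eq hp (w y) (w' y)]
    · simp only [hE, Pi.add_apply, Pi.sub_apply]
      linarith [Eterm_eq hp (w τ₀) (w' τ₀)]
  have hle := hconv.norm_image_sub_le_of_norm_hasDerivWithin_le (C := 0) (f' := fun _ => (0:ℝ))
      (fun x hx => hEd x hx) (fun x _ => by simp) h₂ h₁
  rw [zero_mul] at hle
  have : E τ₁ = E τ₂ := by
    have := norm_le_zero_iff.1 hle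
    have := sub_eq_zero.1 this
    exact this
  exact this
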